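/- Every graph K ∈ 𝒦(p,q) has an even number of edges. Consequently, the path P₄ on 4 vertices, which has 3 edges, does not belong to 𝒦(p,q) for any p, q; hence the converse of the partial-transpose criterion fails: there is a vertex ordering of P₄ whose adjacency matrix satisfies A = A^{Γ₂} (all 2 × 2 blocks symmetric), yet P₄ ∉ 𝒦(2,2). -/

import Mathlib

open SimpleGraph

variable {α β : Type*}

/-- The tensor (categorical / direct) product of two simple graphs:
`(g,h)` and `(g',h')` are adjacent iff `g ~ g'` in `G` and `h ~ h'` in `H`. -/
def tensorProd (G : SimpleGraph α) (H : SimpleGraph β) : SimpleGraph (α × β) where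
  Adj x y := G.Adj x.1 y.1 ∧ H.Adj x.2 y.2
  symm := ⟨fun _ _ h => ⟨h.1.symm, h.2.symm⟩⟩
  loopless := ⟨fun x h => G.loopless.irrefl x.1 h.1⟩

infixl:70 " ⊗t " => tensorProd

@[simp] lemma tensorProd_adj (G : SimpleGraph α) (H : SimpleGraph β) (x y : α × β) :
    (G ⊗t H).Adj x y ↔ G.Adj x.1 y.1 ∧ H.Adj x.2 y.2 := Iff.rfl

/-- The 2-sum (sum modulo 2) of two graphs on a common vertex set: the edge set is
the symmetric difference of the two edge sets. -/
def twoSum (G H : SimpleGraph α) : SimpleGraph α where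
  Adj u v := (G.Adj u v ∧ ¬ H.Adj u v) ∨ (H.Adj u v ∧ ¬ G.Adj u v)
  symm := ⟨fun u v h => h.imp (fun h' => ⟨h'.1.symm, fun hh => h'.2 hh.symm⟩)
    (fun h' => ⟨h'.1.symm, fun hh => h'.2 hh.symm⟩)⟩
  loopless := ⟨fun u h => h.elim (fun h' => G.loopless.irrefl u h'.1)
    (fun h' => H.loopless.irrefl u h'.1)⟩

@[simp] lemma twoSum_adj (G H : SimpleGraph α) (u v : α) :
    (twoSum G H).Adj u v ↔ (G.Adj u v ∧ ¬ H.Adj u v) ∨ (H.Adj u v ∧ ¬ G.Adj u v) := Iff.rfl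

/-- The iterated 2-sum `⊕_{k=1}^l F k` (`⊥`, the empty graph, is the neutral element). -/
def twoSumMany {l : ℕ} (F : Fin l → SimpleGraph α) : SimpleGraph α :=
  (List.ofFn F).foldr twoSum ⊥

/-- `K ∈ 𝒦(p,q)`: `K` is a 2-sum `⊕_{k=1}^l (G_k ⊗ H_k)` of tensor products, where every
`G_k` is a graph on `p` fixed vertices with at least one edge and every `H_k` is a graph on
`q` fixed vertices with at least one edge. -/
def MemK (p q : ℕ) (K : SimpleGraph (Fin p × Fin q)) : Prop :=
  ∃ (l : ℕ) (G : Fin l → SimpleGraph (Fin p)) (H : Fin l → SimpleGraph (Fin q)),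
    0 < l ∧ (∀ k, ∃ a b, (G k).Adj a b) ∧ (∀ k, ∃ c d, (H k).Adj c d) ∧
    K = twoSumMany fun k => (G k) ⊗t (H k)

/-- A graph on `α × β` is cross-like if `(a,b) ~ (c,d)` implies `(a,d) ~ (c,b)`. -/
def CrossLike (K : SimpleGraph (α × β)) : Prop :=
  ∀ a c : α, ∀ b d : β, K.Adj (a, b) (c, d) → K.Adj (a, d) (c, b)

/-- The graph with the single edge `{a,b}` (for `a ≠ b`). -/
def singleEdge (a b : α) : SimpleGraph α := fromEdgeSet {s(a, b)}

/-- The tensor-elementary graph `E(i,i';j,j')`: the tensor product of the single-edge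
graph with edge `{g_i, g_{i'}}` and the single-edge graph with edge `{h_j, h_{j'}}`. -/
def tensorElem {p q : ℕ} (i i' : Fin p) (j j' : Fin q) : SimpleGraph (Fin p × Fin q) :=
  singleEdge i i' ⊗t singleEdge j j'

open scoped Classical in
/-- The adjacency matrix of a graph (entries in `ℕ`). -/
noncomputable def adjMat {V : Type*} (K : SimpleGraph V) : Matrix V V ℕ :=
  Matrix.of fun u v => if K.Adj u v then 1 else 0

/-- The partial transpose of a `pq × pq` matrix viewed as a `p × p` array of `q × q` blocks:
each block is transposed independently. -/
def ptrans {p q : ℕ} {R : Type*} (M : Matrix (Fin p × Fin q) (Fin p × Fin q) R) :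
    Matrix (Fin p × Fin q) (Fin p × Fin q) R :=
  Matrix.of fun x y => M (x.1, y.2) (y.1, x.2)

/-! ### Auxiliary lemmas -/


lemma even_card_of_invol {γ : Type*} [DecidableEq γ] (s : Finset γ) (f : γ → γ)
    (hmem : ∀ x ∈ s, f x ∈ s) (hinv : ∀ x ∈ s, f (f x) = x) (hne : ∀ x ∈ s, f x ≠ x) :
    Even s.card := by
  induction s using Finset.strongInduction with
  | _ s ih =>
    rcases s.eq_empty_or_nonempty with rfl | ⟨a, ha⟩
    · simp
    · have hfa : f a ∈ s := hmem a ha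
      have hfna : f a ≠ a := hne a ha
      set t := s \ {a, f a} with ht
      have hsub : t ⊂ s := by
        refine Finset.ssubset_iff_of_subset (Finset.sdiff_subset) |>.mpr ⟨a, ha, by simp [ht]⟩
      have htcard : t.card = s.card - 2 := by
        rw [ht, Finset.card_sdiff_of_subset (by intro x hx; simp at hx; rcases hx with rfl|rfl <;> assumption)]
        simp [Finset.card_insert_of_notMem, hfna.symm]
      have h2 : 2 ≤ s.card := by
        have : ({a, f a} : Finset γ).card = 2 := by
          rw [Finset.card_insert_of_notMem (by simpa using hfna.symm), Finset.card_singleton]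
        calc 2 = ({a, f a} : Finset γ).card := this.symm
          _ ≤ s.card := Finset.card_le_card
            (by intro x hx; simp at hx; rcases hx with rfl|rfl <;> assumption)
      have heven : Even t.card := by
        refine ih t hsub ?_ ?_ ?_
        · intro x hx
          rw [ht] at hx ⊢
          simp only [Finset.mem_sdiff, Finset.mem_insert, Finset.mem_singleton] at hx ⊢
          obtain ⟨hxs, hx2⟩ := hx
          push_neg at hx2
          refine ⟨hmem x hxs, ?_⟩
          rintro (h | h)
          · apply hx2.2; rw [← h, hinv x hxs]
          · apply hx2.1
            have := congrArg f h
            rwa [hinv x hxs, hinv a ha] at this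
        · intro x hx; exact hinv x (Finset.mem_sdiff.mp hx).1
        · intro x hx; exact hne x (Finset.mem_sdiff.mp hx).1
      have : s.card = t.card + 2 := by omega
      rw [this]
      exact heven.add (by decide)

/-- The edge-flip `s((a,b),(c,d)) ↦ s((a,d),(c,b))` on unordered pairs. -/
def flipS : Sym2 (α × β) → Sym2 (α × β) :=
  Sym2.lift ⟨fun x y => s((x.1, y.2), (y.1, x.2)), fun x y => Sym2.eq_swap⟩

@[simp] lemma flipS_mk (x y : α × β) : flipS s(x, y) = s((x.1, y.2), (y.1, x.2)) := rfl

lemma foldr_crossIff (L : List (SimpleGraph (α × β)))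
    (h : ∀ G ∈ L, ∀ (a c : α) (b d : β), G.Adj (a, b) (c, d) ↔ G.Adj (a, d) (c, b)) :
    ∀ (a c : α) (b d : β),
      (L.foldr twoSum ⊥).Adj (a, b) (c, d) ↔ (L.foldr twoSum ⊥).Adj (a, d) (c, b) := by
  induction L with
  | nil => intro a c b d; simp
  | cons G L ih =>
    intro a c b d
    have hG := h G List.mem_cons_self a c b d
    have hL := ih (fun G' hG' => h G' (List.mem_cons_of_mem _ hG')) a c b d
    simp only [List.foldr_cons, twoSum_adj]
    tauto

lemma foldr_adj_exists (L : List (SimpleGraph α)) (x y : α)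
    (h : (L.foldr twoSum ⊥).Adj x y) : ∃ G ∈ L, G.Adj x y := by
  induction L with
  | nil => simp at h
  | cons G L ih =>
    simp only [List.foldr_cons, twoSum_adj] at h
    rcases h with ⟨h1, _⟩ | ⟨h1, _⟩
    · exact ⟨G, List.mem_cons_self, h1⟩
    · obtain ⟨G', hG', hadj⟩ := ih h1
      exact ⟨G', List.mem_cons_of_mem _ hG', hadj⟩

open scoped Classical in
lemma memK_even (p q : ℕ) (K : SimpleGraph (Fin p × Fin q)) (h : MemK p q K) :
    Even K.edgeFinset.card := by
  obtain ⟨l, G, H, -, -, -, rfl⟩ := h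
  set L := List.ofFn (fun k => (G k) ⊗t (H k)) with hL
  have hmemL : ∀ M ∈ L, ∃ k, M = (G k) ⊗t (H k) := by
    intro M hM
    rw [hL, List.mem_ofFn] at hM
    obtain ⟨k, hk⟩ := hM
    exact ⟨k, hk.symm⟩
  set K := twoSumMany fun k => (G k) ⊗t (H k) with hK
  have hKL : K = L.foldr twoSum ⊥ := rfl
  have hcross : ∀ (a c : Fin p) (b d : Fin q),
      K.Adj (a, b) (c, d) ↔ K.Adj (a, d) (c, b) := by
    rw [hKL]
    refine foldr_crossIff L ?_
    intro M hM a c b d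
    obtain ⟨k, rfl⟩ := hmemL M hM
    simp only [tensorProd_adj]
    rw [SimpleGraph.adj_comm (H k) b d]
  have hne : ∀ x y : Fin p × Fin q, K.Adj x y → x.1 ≠ y.1 ∧ x.2 ≠ y.2 := by
    intro x y hxy
    rw [hKL] at hxy
    obtain ⟨M, hM, hadj⟩ := foldr_adj_exists L x y hxy
    obtain ⟨k, rfl⟩ := hmemL M hM
    exact ⟨(hadj.1).ne, (hadj.2).ne⟩
  refine even_card_of_invol K.edgeFinset flipS ?_ ?_ ?_
  · intro e he
    induction e using Sym2.ind with
    | _ u v =>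
      obtain ⟨a, b⟩ := u; obtain ⟨c, d⟩ := v
      rw [SimpleGraph.mem_edgeFinset, SimpleGraph.mem_edgeSet] at he
      rw [flipS_mk, SimpleGraph.mem_edgeFinset, SimpleGraph.mem_edgeSet]
      exact (hcross a c b d).mp he
  · intro e _
    induction e using Sym2.ind with
    | _ u v => obtain ⟨a, b⟩ := u; obtain ⟨c, d⟩ := v; rfl
  · intro e he
    induction e using Sym2.ind with
    | _ u v =>
      obtain ⟨a, b⟩ := u; obtain ⟨c, d⟩ := v
      rw [SimpleGraph.mem_edgeFinset, SimpleGraph.mem_edgeSet] at he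
      obtain ⟨hac, hbd⟩ := hne _ _ he
      rw [flipS_mk]
      intro hEq
      rcases Sym2.eq_iff.mp hEq with ⟨h1, -⟩ | ⟨h1, -⟩
      · exact hbd ((Prod.ext_iff.mp h1).2).symm
      · exact hac (Prod.ext_iff.mp h1).1

open scoped Classical in
lemma iso_card_edgeFinset {V W : Type*} [Fintype V] [Fintype W]
    (G : SimpleGraph V) (G' : SimpleGraph W) (φ : G ≃g G') :
    G.edgeFinset.card = G'.edgeFinset.card := by
  rw [SimpleGraph.edgeFinset, SimpleGraph.edgeFinset, Set.toFinset_card, Set.toFinset_card]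
  exact Fintype.card_congr φ.mapEdgeSet

open scoped Classical in
lemma path4_card : (SimpleGraph.pathGraph 4).edgeFinset.card = 3 := by
  have h : (SimpleGraph.pathGraph 4).edgeFinset =
      {s((0 : Fin 4), (1 : Fin 4)), s((1 : Fin 4), (2 : Fin 4)), s((2 : Fin 4), (3 : Fin 4))} := by
    ext e
    induction e using Sym2.ind with
    | _ u v =>
      rw [SimpleGraph.mem_edgeFinset, SimpleGraph.mem_edgeSet, SimpleGraph.pathGraph_adj]
      revert u v; decide
  rw [h]; decide

/-- The concrete path on `Fin 2 × Fin 2`: `(0,1) - (0,0) - (1,0) - (1,1)`. -/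
def myP : SimpleGraph (Fin 2 × Fin 2) where
  Adj u v := u ≠ v ∧ (u.1 = v.1 ∨ (u.2 = 0 ∧ v.2 = 0))
  symm := ⟨fun u v h => ⟨h.1.symm, h.2.imp Eq.symm (fun h' => ⟨h'.2, h'.1⟩)⟩⟩
  loopless := ⟨fun u h => h.1 rfl⟩

instance : DecidableRel myP.Adj := fun u v =>
  inferInstanceAs (Decidable (u ≠ v ∧ (u.1 = v.1 ∨ (u.2 = 0 ∧ v.2 = 0))))

def myEquiv : (Fin 2 × Fin 2) ≃ Fin 4 where
  toFun u := ![![1, 0], ![2, 3]] u.1 u.2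
  invFun i := ![((0 : Fin 2), (1 : Fin 2)), (0, 0), (1, 0), (1, 1)] i
  left_inv := by decide
  right_inv := by decide

def myIso : myP ≃g SimpleGraph.pathGraph 4 where
  toEquiv := myEquiv
  map_rel_iff' := by
    intro u v
    rw [SimpleGraph.pathGraph_adj]
    revert u v; decide

open scoped Classical in
/-- Every `K ∈ 𝒦(p,q)` has an even number of edges; consequently the path `P₄` on `4`
vertices, having `3` edges, belongs to no `𝒦(p,q)`. Hence the converse of the
partial-transpose criterion fails: there is a vertex ordering of `P₄` (a graph on
`Fin 2 × Fin 2` isomorphic to `P₄`) whose adjacency matrix equals its own partial transpose,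
yet which is not in `𝒦(2,2)`. -/
theorem converse_of_partial_transpose_criterion_fails :
    (∀ (p q : ℕ) (K : SimpleGraph (Fin p × Fin q)), MemK p q K →
      Even K.edgeFinset.card) ∧
    (SimpleGraph.pathGraph 4).edgeFinset.card = 3 ∧
    (∀ (p q : ℕ) (K : SimpleGraph (Fin p × Fin q)), MemK p q K →
      ¬ Nonempty (K ≃g SimpleGraph.pathGraph 4)) ∧
    ∃ P : SimpleGraph (Fin 2 × Fin 2), Nonempty (P ≃g SimpleGraph.pathGraph 4) ∧
      adjMat P = ptrans (adjMat P) ∧ ¬ MemK 2 2 P := by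
  have heven := memK_even
  have hpath : (SimpleGraph.pathGraph 4).edgeFinset.card = 3 := path4_card
  have hniso : ∀ (p q : ℕ) (K : SimpleGraph (Fin p × Fin q)), MemK p q K →
      ¬ Nonempty (K ≃g SimpleGraph.pathGraph 4) := by
    rintro p q K hK ⟨φ⟩
    have h1 := heven p q K hK
    rw [iso_card_edgeFinset K _ φ, hpath] at h1
    exact (by decide : ¬ Even 3) h1
  refine ⟨heven, hpath, hniso, myP, ⟨myIso⟩, ?_, fun h => hniso 2 2 myP h ⟨myIso⟩⟩
  have key : ∀ x y : Fin 2 × Fin 2, myP.Adj x y ↔ myP.Adj (x.1, y.2) (y.1, x.2) := by decide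
  ext x y
  simp only [adjMat, ptrans, Matrix.of_apply]
  by_cases h : myP.Adj x y
  · rw [if_pos h, if_pos ((key x y).mp h)]
  · rw [if_neg h, if_neg (fun h' => h ((key x y).mpr h'))]
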